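/- arXiv:2107.12453 — 7 statements merged into one kernel-verified Lean document; each statement's English description precedes it below -/
import Mathlib

section
/- Let Q(x) ∈ Z[x] be a monic polynomial of degree d with all roots real and contained in [-2√2, 2√2], and define R(x) = x^d · Q(x + 2/x). Then R(x) is a monic integer polynomial of degree 2d, all of whose complex roots α satisfy |α| = √2, and R(1) = Q(3). -/
open Polynomial

theorem stmt_1 (Q : Polynomial ℤ) (d : ℕ) (hmonic : Q.Monic) (hdeg : Q.natDegree = d)
    (hroots : ∀ z : ℂ, aeval z Q = 0 →
      z.im = 0 ∧ -(2 * Real.sqrt 2) ≤ z.re ∧ z.re ≤ 2 * Real.sqrt 2)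
    (R : Polynomial ℤ)
    (hR : R = ∑ i ∈ Finset.range (d + 1), C (Q.coeff i) * X ^ (d - i) * (X ^ 2 + 2) ^ i) :
    R.Monic ∧ R.natDegree = 2 * d ∧
      (∀ z : ℂ, aeval z R = 0 → ‖z‖ = Real.sqrt 2) ∧
      R.eval 1 = Q.eval 3 := by
  have hcd : Q.coeff d = 1 := by rw [← hdeg]; exact hmonic.coeff_natDegree
  -- basic facts about X^2+2
  have hbm : (X ^ 2 + 2 : ℤ[X]).Monic := by
    have := Polynomial.monic_X_pow_add_C (R := ℤ) 2 (n := 2) (by norm_num)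
    simpa [Polynomial.C_eq_natCast] using this
  have hbd : (X ^ 2 + 2 : ℤ[X]).natDegree = 2 := by compute_degree!
  have htopm : ((X ^ 2 + 2 : ℤ[X]) ^ d).Monic := hbm.pow d
  have htopdeg : ((X ^ 2 + 2 : ℤ[X]) ^ d).degree = ((2 * d : ℕ) : WithBot ℕ) := by
    rw [degree_eq_natDegree htopm.ne_zero, hbm.natDegree_pow, hbd, Nat.mul_comm]
  -- the low order part
  have hrestdeg : (∑ i ∈ Finset.range d,
      C (Q.coeff i) * X ^ (d - i) * (X ^ 2 + 2) ^ i : ℤ[X]).degree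
      < ((2 * d : ℕ) : WithBot ℕ) := by
    refine lt_of_le_of_lt (Polynomial.degree_sum_le _ _) ?_
    rw [Finset.sup_lt_iff (by exact WithBot.bot_lt_coe _)]
    intro i hi
    have hid : i < d := Finset.mem_range.mp hi
    set p : ℤ[X] := C (Q.coeff i) * X ^ (d - i) * (X ^ 2 + 2) ^ i with hp
    rcases eq_or_ne p 0 with h0 | h0
    · rw [h0, degree_zero]; exact WithBot.bot_lt_coe _
    · rw [degree_eq_natDegree h0, Nat.cast_lt]
      have h1 : p.natDegree ≤ (C (Q.coeff i) * X ^ (d - i)).natDegree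
          + ((X ^ 2 + 2 : ℤ[X]) ^ i).natDegree := natDegree_mul_le
      have h2 : (C (Q.coeff i) * X ^ (d - i) : ℤ[X]).natDegree ≤ 0 + (d - i) := by
        refine le_trans natDegree_mul_le ?_
        simp [natDegree_C]
      have h3 : ((X ^ 2 + 2 : ℤ[X]) ^ i).natDegree = i * 2 := by
        rw [hbm.natDegree_pow, hbd]
      omega
  have hsplit : R = (∑ i ∈ Finset.range d,
      C (Q.coeff i) * X ^ (d - i) * (X ^ 2 + 2) ^ i) + (X ^ 2 + 2 : ℤ[X]) ^ d := by
    rw [hR, Finset.sum_range_succ, hcd]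
    simp
  have hRdeg : R.degree = ((2 * d : ℕ) : WithBot ℕ) := by
    rw [hsplit, Polynomial.degree_add_eq_right_of_degree_lt (by rw [htopdeg]; exact hrestdeg),
      htopdeg]
  have hRmonic : R.Monic := by
    rw [hsplit]
    exact htopm.add_of_right (by rw [htopdeg]; exact hrestdeg)
  refine ⟨hRmonic, Polynomial.natDegree_eq_of_degree_eq_some hRdeg, ?_, ?_⟩
  · -- roots
    intro z hz
    have hz0 : z ≠ 0 := by
      rintro rfl
      rw [hR, map_sum] at hz
      rw [Finset.sum_eq_single_of_mem d (Finset.self_mem_range_succ d)] at hz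
      · simp only [map_mul, map_pow, aeval_C, aeval_X, map_add, map_ofNat, Nat.sub_self,
          pow_zero, mul_one, hcd] at hz
        norm_num at hz
      · intro i hi hne
        have hid : i < d := by
          rcases Finset.mem_range.mp hi with h
          omega
        simp [zero_pow (Nat.sub_ne_zero_of_lt hid)]
    obtain ⟨w, hw⟩ : ∃ w : ℂ, w = z + 2 / z := ⟨_, rfl⟩
    have hzw : z * w = z ^ 2 + 2 := by
      rw [hw]
      field_simp
    have hQw : aeval w Q = 0 := by
      have hkey : z ^ d * aeval w Q = aeval z R := by
        rw [hR, map_sum, Polynomial.aeval_eq_sum_range, hdeg, Finset.mul_sum]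
        refine Finset.sum_congr rfl ?_
        intro i hi
        have hid : i ≤ d := Nat.lt_succ_iff.mp (Finset.mem_range.mp hi)
        simp only [map_mul, map_pow, aeval_C, aeval_X, map_add, map_ofNat, zsmul_eq_mul,
          algebraMap_int_eq, eq_intCast, map_intCast]
        have hzd : z ^ d = z ^ (d - i) * z ^ i := by rw [← pow_add]; congr 1; omega
        rw [← hzw, hzd]
        ring
      rw [hz] at hkey
      rcases mul_eq_zero.mp hkey with h | h
      · exact absurd h (pow_ne_zero d hz0)
      · exact h
    obtain ⟨him, hlb, hub⟩ := hroots w hQw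
    have hwre : (w.re : ℂ) = w := Complex.conj_eq_iff_re.mp (Complex.conj_eq_iff_im.mpr him)
    have hE : z ^ 2 + 2 = w * z := by rw [← hzw]; ring
    have hEc : (starRingEnd ℂ) z ^ 2 + 2 = w * (starRingEnd ℂ) z := by
      have := congrArg (starRingEnd ℂ) hE
      simpa [map_add, map_mul, map_pow, map_ofNat, Complex.conj_eq_iff_im.mpr him] using this
    have hfac : (z - (starRingEnd ℂ) z) * (z + (starRingEnd ℂ) z - w) = 0 := by
      linear_combination hE - hEc
    have hs : Real.sqrt 2 ^ 2 = 2 := Real.sq_sqrt (by norm_num)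
    rcases mul_eq_zero.mp hfac with h | h
    · -- z real
      have hz_im : z.im = 0 := by
        have : (starRingEnd ℂ) z = z := by linear_combination -h
        exact Complex.conj_eq_iff_im.mp this
      have hzre : (z.re : ℂ) = z := Complex.conj_eq_iff_re.mp (Complex.conj_eq_iff_im.mpr hz_im)
      set r : ℝ := z.re with hr
      have hr0 : r ≠ 0 := by
        intro h0
        apply hz0
        rw [← hzre, h0, Complex.ofReal_zero]
      have hEr : r ^ 2 + 2 = w.re * r := by
        have : ((r ^ 2 + 2 : ℝ) : ℂ) = ((w.re * r : ℝ) : ℂ) := by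
          push_cast
          rw [hzre, hwre]
          exact hE
        exact_mod_cast this
      have hr2 : r ^ 2 = 2 := by
        rcases lt_or_gt_of_ne hr0 with hrneg | hrpos
        · have hp : (0:ℝ) ≤ (w.re + 2 * Real.sqrt 2) * (-r) :=
            mul_nonneg (by linarith) (by linarith)
          have h1 : (r + Real.sqrt 2) ^ 2 ≤ 0 := by nlinarith
          have h2 : r + Real.sqrt 2 = 0 := by
            have h3 := le_antisymm h1 (sq_nonneg (r + Real.sqrt 2))
            exact pow_eq_zero_iff (n := 2) (by norm_num) |>.mp h3
          have hrv : r = -Real.sqrt 2 := by linarith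
          rw [hrv]; linear_combination hs
        · have hp : (0:ℝ) ≤ (2 * Real.sqrt 2 - w.re) * r :=
            mul_nonneg (by linarith) (by linarith)
          have h1 : (r - Real.sqrt 2) ^ 2 ≤ 0 := by nlinarith
          have h2 : r - Real.sqrt 2 = 0 := by
            have h3 := le_antisymm h1 (sq_nonneg (r - Real.sqrt 2))
            exact pow_eq_zero_iff (n := 2) (by norm_num) |>.mp h3
          have hrv : r = Real.sqrt 2 := by linarith
          rw [hrv]; linear_combination hs
      rw [← hzre, Complex.norm_real, Real.norm_eq_abs, ← Real.sqrt_sq_eq_abs, hr2]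
    · -- z + conj z = w
      have hsum : z + (starRingEnd ℂ) z = w := by linear_combination h
      have h2 : z * (starRingEnd ℂ) z = 2 := by linear_combination z * hsum - hE
      have hnorm : Complex.normSq z = 2 := by
        have := Complex.mul_conj z
        rw [h2] at this
        exact_mod_cast this.symm
      rw [Complex.norm_def, hnorm]
  · -- evaluation at 1
    rw [hR, Polynomial.eval_finset_sum, Polynomial.eval_eq_sum_range, hdeg]
    refine Finset.sum_congr rfl ?_
    intro i hi
    simp [mul_comm]
end

section
/- For all n ≥ 0 and k ≥ 2, the rational functions g_{n,k}(x) := (x-1)^{-k} Σ_{j=0}^{k} C(k,j) f_{n+j}(x) satisfy the recurrence g_{n,k}(x) - (x-3) g_{n,k-1}(x) + 2 g_{n,k-2}(x) = 0. -/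
open Polynomial

/-- f 0 = 2, f 1 = X^2 - 4X + 1, f (n+2) = (X^2-4X+1) f (n+1) - X^2 f n. -/
noncomputable def madanF : ℕ → Polynomial ℤ
  | 0 => 2
  | 1 => X ^ 2 - 4 * X + 1
  | (n + 2) => (X ^ 2 - 4 * X + 1) * madanF (n + 1) - X ^ 2 * madanF n

/-- Σ_{j=0}^{k} C(k,j) f_{n+j}, the numerator of g_{n,k}. -/
noncomputable def gNum (n k : ℕ) : Polynomial ℤ :=
  ∑ j ∈ Finset.range (k + 1), (k.choose j : ℤ) • madanF (n + j)

/-- g_{n,k} as a rational function: (X-1)^{-k} Σ_{j=0}^{k} C(k,j) f_{n+j}. -/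
noncomputable def gRat (n k : ℕ) : RatFunc ℚ :=
  (algebraMap (Polynomial ℚ) (RatFunc ℚ) (X - 1)) ⁻¹ ^ k *
    algebraMap (Polynomial ℚ) (RatFunc ℚ) ((gNum n k).map (Int.castRingHom ℚ))

lemma gNum_aux (n k : ℕ) :
    (∑ j ∈ Finset.range (k + 1), (k.choose (j+1) : ℤ) • madanF (n + (j+1)))
      = ∑ j ∈ Finset.range (k + 1), (k.choose j : ℤ) • madanF (n + j)
        - (k.choose 0 : ℤ) • madanF (n + 0) := by
  rw [eq_sub_iff_add_eq, ← Finset.sum_range_succ' (fun j => (k.choose j : ℤ) • madanF (n + j))]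
  rw [Finset.sum_range_succ]
  simp [Nat.choose_succ_self]

lemma gNum_pascal (n k : ℕ) : gNum n (k + 1) = gNum n k + gNum (n + 1) k := by
  unfold gNum
  rw [Finset.sum_range_succ' (fun j => ((k+1).choose j : ℤ) • madanF (n + j))]
  have h1 : ∀ j, ((k+1).choose (j+1) : ℤ) • madanF (n + (j+1))
      = (k.choose j : ℤ) • madanF (n + 1 + j) + (k.choose (j+1) : ℤ) • madanF (n + (j+1)) := by
    intro j
    rw [Nat.choose_succ_succ]
    push_cast
    rw [add_smul, show n + (j+1) = n + 1 + j by ring]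
  simp only [h1]
  rw [Finset.sum_add_distrib, gNum_aux]
  simp only [Nat.choose_zero_right, Nat.cast_one, one_smul]
  abel

lemma gNum_shift (n k : ℕ) :
    gNum (n + 2) k = (X ^ 2 - 4 * X + 1) * gNum (n + 1) k - X ^ 2 * gNum n k := by
  unfold gNum
  rw [Finset.mul_sum, Finset.mul_sum, ← Finset.sum_sub_distrib]
  refine Finset.sum_congr rfl fun j _ => ?_
  rw [show n + 2 + j = n + j + 2 by ring, show n + 1 + j = n + j + 1 by ring, madanF]
  simp only [zsmul_eq_mul]
  ring

lemma gNum_rec (n k : ℕ) :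
    gNum n (k + 2) = (X - 3) * (X - 1) * gNum n (k + 1) - 2 * (X - 1) ^ 2 * gNum n k := by
  rw [show k + 2 = (k + 1) + 1 from rfl, gNum_pascal n (k+1), gNum_pascal n k,
    gNum_pascal (n+1) k, gNum_shift n k]
  ring

theorem stmt_6 : ∀ n k : ℕ,
    gRat n (k + 2) - (algebraMap (Polynomial ℚ) (RatFunc ℚ) X - 3) * gRat n (k + 1)
      + 2 * gRat n k = 0 := by
  intro n k
  have hQ : (gNum n (k+2)).map (Int.castRingHom ℚ)
      - (X - 3) * (X - 1) * (gNum n (k+1)).map (Int.castRingHom ℚ)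
      + 2 * (X - 1) ^ 2 * (gNum n k).map (Int.castRingHom ℚ) = 0 := by
    rw [gNum_rec n k]
    simp only [Polynomial.map_mul, Polynomial.map_sub, Polynomial.map_add,
      Polynomial.map_pow, Polynomial.map_ofNat, Polynomial.map_one, Polynomial.map_X]
    ring
  unfold gRat
  set φ := algebraMap (Polynomial ℚ) (RatFunc ℚ) with hφ
  have hu : φ (X - 1) ≠ 0 := by
    exact RatFunc.algebraMap_ne_zero (by simpa using Polynomial.X_sub_C_ne_zero (1 : ℚ))
  have e1 : (φ (X - 1))⁻¹ ^ (k+1) = (φ (X - 1))⁻¹ ^ (k+2) * φ (X - 1) := by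
    rw [pow_succ _ (k+1), mul_assoc, inv_mul_cancel₀ hu, mul_one]
  have e0 : (φ (X - 1))⁻¹ ^ k = (φ (X - 1))⁻¹ ^ (k+2) * φ (X - 1) ^ 2 := by
    have : (φ (X - 1))⁻¹ ^ 2 * φ (X - 1) ^ 2 = 1 := by
      rw [← mul_pow, inv_mul_cancel₀ hu, one_pow]
    rw [pow_add, mul_assoc, this, mul_one]
  calc (φ (X - 1))⁻¹ ^ (k+2) * φ ((gNum n (k+2)).map (Int.castRingHom ℚ))
        - (φ X - 3) * ((φ (X - 1))⁻¹ ^ (k+1) * φ ((gNum n (k+1)).map (Int.castRingHom ℚ)))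
        + 2 * ((φ (X - 1))⁻¹ ^ k * φ ((gNum n k).map (Int.castRingHom ℚ)))
      = (φ (X - 1))⁻¹ ^ (k+2) *
          φ ((gNum n (k+2)).map (Int.castRingHom ℚ)
            - (X - 3) * (X - 1) * (gNum n (k+1)).map (Int.castRingHom ℚ)
            + 2 * (X - 1) ^ 2 * (gNum n k).map (Int.castRingHom ℚ)) := by
        rw [e1, e0]
        simp only [map_sub, map_add, map_mul, map_pow, map_ofNat, map_one, hφ]
        ring
    _ = 0 := by rw [hQ, map_zero, mul_zero]
end

section
/- For all n ≥ 1 and k ≥ 0, the constant term of the polynomial g_{n,k}(x) equals (-2)^k. -/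
open Polynomial

lemma madanF_eval0 : ∀ n : ℕ, (madanF (n + 1)).eval 0 = 1
  | 0 => by simp [madanF]
  | 1 => by simp [madanF]
  | (n + 2) => by
      show (madanF (n + 1 + 2)).eval 0 = 1
      rw [madanF]
      simp [madanF_eval0 (n + 1), madanF_eval0 n]

lemma gNum_eval0 (n k : ℕ) (hn : 1 ≤ n) : (gNum n k).eval 0 = 2 ^ k := by
  obtain ⟨m, rfl⟩ := Nat.exists_eq_add_of_le hn
  unfold gNum
  have : ∀ j ∈ Finset.range (k + 1),
      ((k.choose j : ℤ) • madanF (1 + m + j)).eval 0 = (k.choose j : ℤ) := by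
    intro j _
    have : 1 + m + j = (m + j) + 1 := by ring
    rw [this]
    simp [madanF_eval0 (m + j)]
  rw [eval_finset_sum, Finset.sum_congr rfl this]
  have := Nat.sum_range_choose k
  have : (∑ j ∈ Finset.range (k + 1), (k.choose j : ℤ)) = ((2 ^ k : ℕ) : ℤ) := by
    exact_mod_cast congrArg (Nat.cast : ℕ → ℤ) this
  simpa using this

theorem stmt_8 : ∀ n k : ℕ, 1 ≤ n → ∀ g : Polynomial ℤ,
    (X - 1) ^ k * g = gNum n k → g.coeff 0 = (-2) ^ k := by
  intro n k hn g hg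
  have h0 := congrArg (Polynomial.eval 0) hg
  rw [gNum_eval0 n k hn] at h0
  simp only [eval_mul, eval_pow, eval_sub, eval_X, eval_one, zero_sub] at h0
  have : (-1 : ℤ) ^ k * ((-1) ^ k * g.eval 0) = (-1) ^ k * 2 ^ k := by rw [h0]
  rw [← mul_assoc, ← mul_pow, neg_mul_neg, one_mul, one_pow, one_mul, ← neg_pow] at this
  rw [coeff_zero_eq_eval_zero, this]
end

section
/- For all n ≥ 0 and k ≥ 2, g_{n,k}(x) + 4 g_{n,k-1}(x) + 4 g_{n,k-2}(x) - x^2 g_{n-1,k}(x) = 0 (for n ≥ 1). -/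
open Polynomial

lemma madanF_rec (n : ℕ) :
    madanF (n + 2) = (X ^ 2 - 4 * X + 1) * madanF (n + 1) - X ^ 2 * madanF n := by
  rfl

lemma key : ∀ k n : ℕ,
    gNum (n + 1) (k + 2) + 4 * (X - 1) * gNum (n + 1) (k + 1) + 4 * (X - 1) ^ 2 * gNum (n + 1) k
      = X ^ 2 * gNum n (k + 2) := by
  intro k
  induction k with
  | zero =>
    intro n
    have g0 : gNum (n + 1) 0 = madanF (n + 1) := by simp [gNum]
    have g1 : gNum (n + 1) 1 = madanF (n + 1) + madanF (n + 2) := by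
      have e : n + 1 + 1 = n + 2 := by omega
      simp [gNum, Finset.sum_range_succ, Nat.choose, e]
    have g2 : gNum (n + 1) 2 = madanF (n + 1) + 2 * madanF (n + 2) + madanF (n + 3) := by
      have e : n + 1 + 1 = n + 2 := by omega
      have e' : n + 1 + 2 = n + 3 := by omega
      simp [gNum, Finset.sum_range_succ, Nat.choose, e, e']
    have g2' : gNum n 2 = madanF n + 2 * madanF (n + 1) + madanF (n + 2) := by
      simp [gNum, Finset.sum_range_succ, Nat.choose]
    have e2 := madanF_rec n
    have e3 := madanF_rec (n + 1)
    have e : n + 1 + 2 = n + 3 := by omega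
    have e' : n + 1 + 1 = n + 2 := by omega
    rw [e, e'] at e3
    rw [g0, g1, g2, g2', e3, e2]
    ring
  | succ k ih =>
    intro n
    have p1 := gNum_pascal (n + 1) (k + 2)
    have p2 := gNum_pascal (n + 1) (k + 1)
    have p3 := gNum_pascal (n + 1) k
    have p4 := gNum_pascal n (k + 2)
    have h : n + 1 + 1 = n + 2 := by omega
    rw [h] at p1 p2 p3
    have p2' : gNum (n + 1) (k + 2) = gNum (n + 1) (k + 1) + gNum (n + 2) (k + 1) := by
      have := gNum_pascal (n + 1) (k + 1)
      have ek : k + 1 + 1 = k + 2 := by omega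
      rw [ek, h] at this
      exact this
    rw [p1, p2, p4]
    linear_combination ih n + ih (n + 1) + 4 * (X - 1) ^ 2 * p3 - p2'

theorem stmt_11 : ∀ n k : ℕ, ∀ a b c d : Polynomial ℤ,
    (X - 1) ^ (k + 2) * a = gNum (n + 1) (k + 2) →
    (X - 1) ^ (k + 1) * b = gNum (n + 1) (k + 1) →
    (X - 1) ^ k * c = gNum (n + 1) k →
    (X - 1) ^ (k + 2) * d = gNum n (k + 2) →
    a + 4 * b + 4 * c - X ^ 2 * d = 0 := by
  intro n k a b c d ha hb hc hd
  have hk := key k n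
  have hmain : (X - 1) ^ (k + 2) * (a + 4 * b + 4 * c - X ^ 2 * d) = 0 := by
    have : (X - 1) ^ (k + 2) * (a + 4 * b + 4 * c - X ^ 2 * d)
        = (X - 1) ^ (k + 2) * a + 4 * (X - 1) * ((X - 1) ^ (k + 1) * b)
          + 4 * (X - 1) ^ 2 * ((X - 1) ^ k * c) - X ^ 2 * ((X - 1) ^ (k + 2) * d) := by
      ring
    rw [this, ha, hb, hc, hd]
    linear_combination hk
  have hne : (X - 1 : Polynomial ℤ) ^ (k + 2) ≠ 0 := by
    apply pow_ne_zero
    have : (X - 1 : Polynomial ℤ) = X - C 1 := by simp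
    rw [this]
    exact X_sub_C_ne_zero 1
  rcases mul_eq_zero.mp hmain with h | h
  · exact absurd h hne
  · exact h
end

section
/- For all n ≥ 0 and k ≥ 0, g_{n,k}(x) ≡ x^{2n}(x+1)^k + 2^k (mod 2), i.e., the reduction of g_{n,k} modulo 2 as a polynomial over F_2 equals x^{2n}(x+1)^k + 2^k mod 2. -/
open Polynomial

lemma two_eq_zero : (2 : Polynomial (ZMod 2)) = 0 := by
  have h : C (2 : ZMod 2) = (2 : Polynomial (ZMod 2)) := by
    rw [show (2 : ZMod 2) = 1 + 1 by decide, map_add, Polynomial.C_1]; norm_num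
  rw [← h, show (2 : ZMod 2) = 0 by decide, map_zero]

lemma four_eq_zero : (4 : Polynomial (ZMod 2)) = 0 := by
  have h : (4 : Polynomial (ZMod 2)) = 2 * 2 := by norm_num
  rw [h, two_eq_zero]; ring

lemma madanF_mod : ∀ n : ℕ, (madanF n).map (Int.castRingHom (ZMod 2)) = X ^ (2 * n) + 1
  | 0 => by
      show (2 : Polynomial ℤ).map (Int.castRingHom (ZMod 2)) = X ^ (2 * 0) + 1
      rw [Polynomial.map_ofNat, pow_zero]
      norm_num
  | 1 => by
      show (X ^ 2 - 4 * X + 1 : Polynomial ℤ).map (Int.castRingHom (ZMod 2)) = X ^ (2 * 1) + 1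
      rw [Polynomial.map_add, Polynomial.map_sub, Polynomial.map_pow, Polynomial.map_mul,
        Polynomial.map_ofNat, Polynomial.map_one, Polynomial.map_X]
      linear_combination (-(X : Polynomial (ZMod 2))) * four_eq_zero
  | (n + 2) => by
      show ((X ^ 2 - 4 * X + 1) * madanF (n + 1) - X ^ 2 * madanF n).map
        (Int.castRingHom (ZMod 2)) = X ^ (2 * (n + 2)) + 1
      rw [Polynomial.map_sub, Polynomial.map_mul, Polynomial.map_mul, Polynomial.map_add,
        Polynomial.map_sub, Polynomial.map_pow, Polynomial.map_mul, Polynomial.map_one,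
        Polynomial.map_X, Polynomial.map_ofNat, madanF_mod (n + 1), madanF_mod n]
      linear_combination (-(X : Polynomial (ZMod 2)) ^ (2 * n + 3) - X) * four_eq_zero

lemma gNum_mod (n k : ℕ) : (gNum n k).map (Int.castRingHom (ZMod 2)) =
    X ^ (2 * n) * (X ^ 2 + 1) ^ k + 2 ^ k := by
  have h1 : (gNum n k).map (Int.castRingHom (ZMod 2)) =
      ∑ j ∈ Finset.range (k + 1),
        (C ((k.choose j : ℤ) : ZMod 2)) * (X ^ (2 * (n + j)) + 1) := by
    rw [gNum, Polynomial.map_sum]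
    refine Finset.sum_congr rfl fun j _ => ?_
    rw [zsmul_eq_mul, ← Polynomial.C_eq_intCast, Polynomial.map_mul, Polynomial.map_C,
      madanF_mod]
    simp
  rw [h1]
  have h2 : ∀ j ∈ Finset.range (k + 1),
      (C ((k.choose j : ℤ) : ZMod 2)) * (X ^ (2 * (n + j)) + 1) =
      X ^ (2 * n) * ((X ^ 2) ^ j * 1 ^ (k - j) * (k.choose j : Polynomial (ZMod 2)))
        + (k.choose j : Polynomial (ZMod 2)) := by
    intro j _
    rw [show ((k.choose j : ℤ) : ZMod 2) = ((k.choose j : ℕ) : ZMod 2) by push_cast; ring,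
      Polynomial.C_eq_natCast]
    ring
  rw [Finset.sum_congr rfl h2, Finset.sum_add_distrib, ← Finset.mul_sum,
    ← Commute.add_pow (Commute.all _ _)]
  have h3 : ∑ j ∈ Finset.range (k + 1), (k.choose j : Polynomial (ZMod 2)) = 2 ^ k := by
    rw [← Nat.cast_sum, Nat.sum_range_choose]
    push_cast; ring
  rw [h3]

theorem stmt_12 : ∀ n k : ℕ, ∀ g : Polynomial ℤ,
    (X - 1) ^ k * g = gNum n k →
    g.map (Int.castRingHom (ZMod 2)) =
      X ^ (2 * n) * (X + 1) ^ k + 2 ^ k := by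
  intro n k g h
  have hm := congrArg (Polynomial.map (Int.castRingHom (ZMod 2))) h
  rw [Polynomial.map_mul, Polynomial.map_pow, Polynomial.map_sub, Polynomial.map_X,
    Polynomial.map_one, gNum_mod] at hm
  have hx1 : (X : Polynomial (ZMod 2)) - 1 = X + 1 := by
    linear_combination -two_eq_zero
  have hsq : (X : Polynomial (ZMod 2)) ^ 2 + 1 = (X + 1) ^ 2 := by
    linear_combination (-(X : Polynomial (ZMod 2))) * two_eq_zero
  rw [hx1, hsq, ← pow_mul] at hm
  match k with
  | 0 => simpa using hm
  | (m + 1) =>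
    have h2 : (2 : Polynomial (ZMod 2)) ^ (m + 1) = 0 := by
      rw [two_eq_zero]; simp
    rw [h2, add_zero] at hm
    have hne : ((X : Polynomial (ZMod 2)) + 1) ^ (m + 1) ≠ 0 := by
      apply pow_ne_zero
      simpa using Polynomial.X_add_C_ne_zero (1 : ZMod 2)
    have key : ((X : Polynomial (ZMod 2)) + 1) ^ (m + 1) * (g.map (Int.castRingHom (ZMod 2))) =
        ((X : Polynomial (ZMod 2)) + 1) ^ (m + 1) * (X ^ (2 * n) * (X + 1) ^ (m + 1)) := by
      rw [hm]; ring
    have hg := mul_left_cancel₀ hne key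
    rw [hg, h2, add_zero]
end

section
/- For all n, k ≥ 0, every coefficient of g_{n,k}(x) in degrees strictly less than 2n is divisible by 2^k; that is, g_{n,k}(x) ≡ 0 modulo the ideal (x^{2n}, 2^k) of Z[x]. -/
open Polynomial

noncomputable section

def cSeq : ℕ → ℤ
  | 0 => 1
  | 1 => 4
  | (n+2) => 4 * cSeq (n+1) - cSeq n +
      ∑ i ∈ (Finset.range (n+1)).attach, cSeq i.1 * cSeq (n - i.1)
  decreasing_by
  · omega
  · omega
  · have := Finset.mem_range.mp i.2; omega
  · have := Finset.mem_range.mp i.2; omega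

def gam : PowerSeries ℤ := PowerSeries.mk cSeq

namespace MadanAux

local notation "PX" => (PowerSeries.X : PowerSeries ℤ)
local notation "pcoeff" => PowerSeries.coeff (R := ℤ)
local notation "PC" => PowerSeries.C (R := ℤ)

lemma keyEq : PX^2 * gam^2 + 1 + (PC 4)*PX*gam = gam + PX^2*gam := by
  ext n
  match n with
  | 0 =>
    simp [gam, PowerSeries.coeff_mul, Finset.Nat.sum_antidiagonal_eq_sum_range_succ_mk, cSeq]
  | 1 =>
    simp [gam, PowerSeries.coeff_mul, Finset.Nat.sum_antidiagonal_eq_sum_range_succ_mk, cSeq,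
      Finset.sum_range_succ, pow_two]
    rw [show ((4:PowerSeries ℤ) = PC 4) from by norm_cast]
    simp
    exact map_ofNat _ 4
  | (n+2) =>
    have h1 : pcoeff (n+2) (PX^2 * gam^2) = ∑ i ∈ Finset.range (n+1), cSeq i * cSeq (n - i) := by
      rw [PowerSeries.coeff_X_pow_mul']
      simp [pow_two, PowerSeries.coeff_mul, Finset.Nat.sum_antidiagonal_eq_sum_range_succ_mk, gam]
    have h2 : pcoeff (n+2) ((PC 4)*PX*gam) = 4 * cSeq (n+1) := by
      rw [mul_assoc, PowerSeries.coeff_C_mul, show n+2 = (n+1)+1 from rfl,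
        PowerSeries.coeff_succ_X_mul]
      simp [gam]
    have h3 : pcoeff (n+2) (PX^2*gam) = cSeq n := by
      rw [PowerSeries.coeff_X_pow_mul']
      simp [gam]
    simp only [map_add, h1, h2, h3]
    rw [show pcoeff (n+2) gam = cSeq (n+2) from PowerSeries.coeff_mk _ _]
    have hc : cSeq (n+2) = 4 * cSeq (n+1) - cSeq n +
      ∑ i ∈ (Finset.range (n+1)).attach, cSeq i.1 * cSeq (n - i.1) := by
      rw [cSeq]
    rw [hc, Finset.sum_attach (Finset.range (n+1)) (fun i => cSeq i * cSeq (n - i))]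
    have h4 : pcoeff (n+2) (1 : PowerSeries ℤ) = 0 := by simp
    rw [h4]
    ring

def bet : PowerSeries ℤ := PX^2 * gam

def alp : PowerSeries ℤ := (PX^2 - 4*PX + 1) - bet

lemma four_eq : (4:PowerSeries ℤ) = PC 4 := by norm_cast

lemma pgam : (PX^2 - 4*PX + 1) * gam = PX^2*gam^2 + 1 := by
  rw [four_eq]
  linear_combination -keyEq

lemma alp_add_bet : alp + bet = PX^2 - 4*PX + 1 := by
  rw [alp]; ring

lemma alp_mul_bet : alp * bet = PX^2 := by
  rw [alp, bet]
  linear_combination (PX^2) * pgam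

lemma coe_ofNat' (m : ℕ) [m.AtLeastTwo] :
    ((OfNat.ofNat m : Polynomial ℤ) : PowerSeries ℤ) = OfNat.ofNat m := by
  rw [← Polynomial.coeToPowerSeries.ringHom_apply, map_ofNat]

lemma coe_pp : (((X:Polynomial ℤ)^2 - 4*X + 1 : Polynomial ℤ) : PowerSeries ℤ) = alp + bet := by
  rw [alp_add_bet, Polynomial.coe_add, Polynomial.coe_sub, Polynomial.coe_mul,
    Polynomial.coe_pow, Polynomial.coe_X, Polynomial.coe_one, coe_ofNat']

lemma coe_madanF (n : ℕ) : ((madanF n : Polynomial ℤ) : PowerSeries ℤ) = alp^n + bet^n := by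
  induction n using Nat.twoStepInduction with
  | zero =>
    rw [madanF, coe_ofNat']
    norm_num
  | one =>
    rw [madanF, coe_pp]
    ring
  | more n ih1 ih2 =>
    rw [madanF, Polynomial.coe_sub, Polynomial.coe_mul, Polynomial.coe_mul, ih1, ih2, coe_pp]
    have hX : (((X:Polynomial ℤ)^2 : Polynomial ℤ) : PowerSeries ℤ) = alp * bet := by
      rw [alp_mul_bet, Polynomial.coe_pow, Polynomial.coe_X]
    rw [hX]
    ring

lemma pow_mul_add_pow (a : PowerSeries ℤ) (n k : ℕ) :
    a^n * (a+1)^k = ∑ j ∈ Finset.range (k+1), ((k.choose j : ℤ) : PowerSeries ℤ) * a^(n+j) := by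
  rw [add_pow, Finset.mul_sum]
  refine Finset.sum_congr rfl fun j hj => ?_
  rw [pow_add]
  push_cast
  ring

lemma coe_gNum (n k : ℕ) :
    ((gNum n k : Polynomial ℤ) : PowerSeries ℤ) = alp^n * (1+alp)^k + bet^n * (1+bet)^k := by
  rw [gNum, ← Polynomial.coeToPowerSeries.ringHom_apply, map_sum]
  have hterm : ∀ j, Polynomial.coeToPowerSeries.ringHom ((k.choose j : ℤ) • madanF (n + j))
      = ((k.choose j : ℤ) : PowerSeries ℤ) * alp^(n+j)
        + ((k.choose j : ℤ) : PowerSeries ℤ) * bet^(n+j) := by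
    intro j
    rw [zsmul_eq_mul, map_mul, map_intCast, Polynomial.coeToPowerSeries.ringHom_apply,
      coe_madanF]
    ring
  rw [Finset.sum_congr rfl (fun j _ => hterm j), Finset.sum_add_distrib,
    ← pow_mul_add_pow alp n k, ← pow_mul_add_pow bet n k]
  ring

lemma constCoeff_bet : PowerSeries.constantCoeff (R := ℤ) bet = 0 := by
  rw [bet]; simp [pow_two]

lemma isUnit_one_add_bet : IsUnit (1 + bet) := by
  rw [PowerSeries.isUnit_iff_constantCoeff, map_add, constCoeff_bet, map_one]
  simp

lemma one_add_alp_mul : (1 + alp) * (1 + bet) = 2 * (PX - 1)^2 := by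
  have h1 := alp_add_bet
  have h2 := alp_mul_bet
  linear_combination h1 + h2

lemma gNum_decomp (n k : ℕ) : ∃ A B : PowerSeries ℤ,
    ((gNum n k : Polynomial ℤ) : PowerSeries ℤ) = PC (2^k) * A + PX^(2*n) * B := by
  obtain ⟨u, hu⟩ := isUnit_one_add_bet
  set w : PowerSeries ℤ := (PX - 1)^2 * ↑u⁻¹ with hw
  refine ⟨alp^n * w^k, gam^n * (1+bet)^k, ?_⟩
  have h1 : (1 + alp) = 2 * w := by
    have h2 : (1 + alp) * ↑u * ↑u⁻¹ = 2 * ((PX - 1)^2 * ↑u⁻¹) := by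
      rw [hu, one_add_alp_mul]; ring
    rw [mul_assoc, u.mul_inv, mul_one] at h2
    rw [h2, hw]
  rw [coe_gNum, h1]
  have hb : bet^n = PX^(2*n) * gam^n := by
    rw [bet, mul_pow, ← pow_mul]
  rw [hb]
  have h2 : (PC (2^k) : PowerSeries ℤ) = 2^k := by
    rw [map_pow, map_ofNat]
  rw [h2, mul_pow, mul_pow]
  ring

lemma coeff_gNum_dvd (n k : ℕ) : ∀ i : ℕ, i < 2*n → (2:ℤ)^k ∣ (gNum n k).coeff i := by
  intro i hi
  obtain ⟨A, B, hAB⟩ := gNum_decomp n k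
  have h := congrArg (pcoeff i) hAB
  rw [Polynomial.coeff_coe, map_add, PowerSeries.coeff_C_mul,
    PowerSeries.coeff_X_pow_mul', if_neg (by omega)] at h
  rw [h, add_zero]
  exact Dvd.intro _ rfl


lemma gNum_mem (n k : ℕ) :
    gNum n k ∈ Ideal.span {(X:Polynomial ℤ)^(2*n), C ((2:ℤ)^k)} := by
  set b : Polynomial ℤ := ∑ j ∈ Finset.range (2*n), C ((gNum n k).coeff j / 2^k) * X^j with hb
  have hbco : ∀ d, b.coeff d = if d ∈ Finset.range (2*n) then (gNum n k).coeff d / 2^k else 0 := by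
    intro d
    rw [hb, Polynomial.finset_sum_coeff]
    simp only [Polynomial.coeff_C_mul, Polynomial.coeff_X_pow, mul_ite, mul_one, mul_zero]
    rw [Finset.sum_ite_eq (Finset.range (2*n)) d (fun j => (gNum n k).coeff j / 2^k)]
  have hdvd : (X:Polynomial ℤ)^(2*n) ∣ gNum n k - C ((2:ℤ)^k) * b := by
    rw [Polynomial.X_pow_dvd_iff]
    intro d hd
    rw [Polynomial.coeff_sub, Polynomial.coeff_C_mul, hbco d, if_pos (Finset.mem_range.mpr hd)]
    rw [Int.mul_ediv_cancel' (coeff_gNum_dvd n k d hd)]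
    ring
  obtain ⟨a, ha⟩ := hdvd
  exact Ideal.mem_span_pair.mpr ⟨a, b, by linear_combination -ha⟩


end MadanAux

end

theorem stmt_13 : ∀ n k : ℕ, ∀ g : Polynomial ℤ,
    (X - 1) ^ k * g = gNum n k →
    ∀ i : ℕ, i < 2 * n → (2 : ℤ) ^ k ∣ g.coeff i := by
  intro n k g hg i hi
  set I : Ideal (Polynomial ℤ) := Ideal.span {(X:Polynomial ℤ)^(2*n), C ((2:ℤ)^k)} with hI
  have hXmem : (X:Polynomial ℤ)^(2*n) ∈ I := Ideal.subset_span (by simp)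
  set π := Ideal.Quotient.mk I with hπ
  have hunit : IsUnit (π (X - 1)) := by
    refine IsUnit.of_mul_eq_one (π (-(∑ j ∈ Finset.range (2*n), X^j))) ?_
    rw [← map_mul, ← map_one π, Ideal.Quotient.mk_eq_mk_iff_sub_mem]
    have hgeo : (∑ j ∈ Finset.range (2*n), (X:Polynomial ℤ)^j) * (X - 1) = X^(2*n) - 1 :=
      geom_sum_mul _ _
    have : (X - 1) * (-(∑ j ∈ Finset.range (2*n), (X:Polynomial ℤ)^j)) - 1 = -(X^(2*n)) := by
      linear_combination -hgeo
    rw [this]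
    exact neg_mem hXmem
  have hg0 : π ((X-1)^k) * π g = 0 := by
    rw [← map_mul, hg]
    exact Ideal.Quotient.eq_zero_iff_mem.mpr (MadanAux.gNum_mem n k)
  have hgI : g ∈ I := by
    rw [map_pow] at hg0
    have := (hunit.pow k).mul_right_eq_zero.mp hg0
    exact Ideal.Quotient.eq_zero_iff_mem.mp this
  obtain ⟨a, b, hab⟩ := Ideal.mem_span_pair.mp hgI
  have hcoeff := congrArg (fun p => Polynomial.coeff p i) hab
  rw [Polynomial.coeff_add, Polynomial.coeff_mul_C] at hcoeff
  have h0 : (a * X^(2*n)).coeff i = 0 := by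
    have : (X:Polynomial ℤ)^(2*n) ∣ a * X^(2*n) := Dvd.intro_left _ rfl
    exact (Polynomial.X_pow_dvd_iff.mp this) i hi
  rw [h0, zero_add] at hcoeff
  exact ⟨b.coeff i, by rw [← hcoeff]; ring⟩
end

section
/- Let Q ∈ Z[z] be a monic polynomial with Q(2) odd, Q(z) ≡ (z-1)^{deg Q} (mod 2) coefficient-wise, and all complex roots in the open disc |z| < √2 (a 'compliant representation' of Q(2)). Then for any even c with |c| ≤ 14, if the quality q(Q) := min{|Q(z)| : |z| = √2} is at least 7, the polynomial R(z) = (z^4 - 1) Q(z) + c is a compliant representation of 15·Q(2) + c with quality at least 3·q(Q) - |c| ≥ 7. -/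
open Polynomial

/-- Moving a point on the circle of radius `√2` radially outward increases its distance
to any point strictly inside the disc. -/
lemma aux_radial (u r : ℂ) (a : ℝ) (ha : 1 ≤ a) (hu : ‖u‖ = Real.sqrt 2)
    (hr : ‖r‖ < Real.sqrt 2) :
    ‖u - r‖ ≤ ‖(a : ℂ) * u - r‖ := by
  rw [Complex.norm_def, Complex.norm_def]
  apply Real.sqrt_le_sqrt
  rw [Complex.normSq_sub, Complex.normSq_sub, Complex.normSq_mul, Complex.normSq_ofReal]
  have hU : Complex.normSq u = 2 := by
    rw [Complex.normSq_eq_norm_sq, hu, Real.sq_sqrt] <;> norm_num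
  have hp : ((a : ℂ) * u * starRingEnd ℂ r).re = a * (u * starRingEnd ℂ r).re := by
    rw [mul_assoc]
    simp [Complex.mul_re]
  set p := (u * starRingEnd ℂ r).re with hpdef
  have hple : p ≤ ‖u‖ * ‖r‖ := by
    calc p ≤ ‖u * starRingEnd ℂ r‖ := Complex.re_le_norm _
      _ = ‖u‖ * ‖r‖ := by rw [norm_mul, Complex.norm_conj]
  have hs2 : Real.sqrt 2 * Real.sqrt 2 = 2 := Real.mul_self_sqrt (by norm_num)
  have hr0 : 0 ≤ ‖r‖ := norm_nonneg r
  have hp2 : p ≤ 2 := by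
    rw [hu] at hple
    nlinarith
  rw [hU, hp]
  nlinarith [mul_nonneg (sub_nonneg.2 ha) (show (0:ℝ) ≤ 2 * a + 2 - 2 * p by nlinarith)]

lemma aux_prod_le {s : Multiset ℂ} {f g : ℂ → ℝ} (h0 : ∀ a ∈ s, 0 ≤ f a)
    (h : ∀ a ∈ s, f a ≤ g a) : (s.map f).prod ≤ (s.map g).prod := by
  induction s using Multiset.induction with
  | empty => simp
  | cons a s ih =>
    simp only [Multiset.map_cons, Multiset.prod_cons]
    have h0s : ∀ b ∈ s, 0 ≤ f b := fun b hb => h0 b (Multiset.mem_cons_of_mem hb)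
    have hss : ∀ b ∈ s, f b ≤ g b := fun b hb => h b (Multiset.mem_cons_of_mem hb)
    have hfa := h0 a (Multiset.mem_cons_self a s)
    have hfg := h a (Multiset.mem_cons_self a s)
    have hprod0 : 0 ≤ (s.map f).prod := by
      apply Multiset.prod_nonneg
      intro x hx
      obtain ⟨b, hb, rfl⟩ := Multiset.mem_map.1 hx
      exact h0s b hb
    exact mul_le_mul hfg (ih h0s hss) hprod0 (le_trans hfa hfg)

/-- The minimum of `|Q|` over `|z| ≥ √2` is controlled by its minimum on `|z| = √2`,
when all roots of `Q` lie in `|z| < √2`. -/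
lemma aux_exterior (Q : Polynomial ℤ) (hmonic : Q.Monic)
    (hroots : ∀ z : ℂ, aeval z Q = 0 → ‖z‖ < Real.sqrt 2)
    (q : ℝ) (hq : ∀ z : ℂ, ‖z‖ = Real.sqrt 2 → q ≤ ‖aeval z Q‖) :
    ∀ z : ℂ, Real.sqrt 2 ≤ ‖z‖ → q ≤ ‖aeval z Q‖ := by
  intro z hz
  have hs2 : (0:ℝ) < Real.sqrt 2 := Real.sqrt_pos.2 (by norm_num)
  have ht0 : (0:ℝ) < ‖z‖ := lt_of_lt_of_le hs2 hz
  set t := ‖z‖ with htdef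
  set u : ℂ := ((Real.sqrt 2 / t : ℝ) : ℂ) * z with hudef
  have hu : ‖u‖ = Real.sqrt 2 := by
    rw [hudef, norm_mul, Complex.norm_real, Real.norm_eq_abs, abs_of_pos (by positivity), ← htdef]
    field_simp
  have ha : (1:ℝ) ≤ t / Real.sqrt 2 := (one_le_div hs2).2 hz
  have hz_eq : z = ((t / Real.sqrt 2 : ℝ) : ℂ) * u := by
    rw [hudef, ← mul_assoc, ← Complex.ofReal_mul]
    have h1 : t / Real.sqrt 2 * (Real.sqrt 2 / t) = 1 := by
      field_simp
    rw [h1, Complex.ofReal_one, one_mul]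
  set Qc := Q.map (algebraMap ℤ ℂ) with hQc
  have hQcm : Qc.Monic := hmonic.map _
  have hfac : Qc = (Multiset.map (fun a => X - C a) Qc.roots).prod :=
    (IsAlgClosed.splits _).eq_prod_roots_of_monic hQcm
  have heval : ∀ w : ℂ, aeval w Q = (Multiset.map (fun a => w - a) Qc.roots).prod := by
    intro w
    rw [aeval_def, eval₂_eq_eval_map, ← hQc]
    conv_lhs => rw [hfac]
    rw [eval_multiset_prod, Multiset.map_map]
    congr 1
    ext a
    simp
  have habs : ∀ w : ℂ, ‖aeval w Q‖
      = (Multiset.map (fun a => ‖w - a‖) Qc.roots).prod := by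
    intro w
    rw [heval]
    have := map_multiset_prod (normHom : ℂ →*₀ ℝ) (Multiset.map (fun a => w - a) Qc.roots)
    rw [Multiset.map_map] at this
    exact this
  have hrootmem : ∀ a ∈ Qc.roots, ‖a‖ < Real.sqrt 2 := by
    intro a haa
    apply hroots
    have h := isRoot_of_mem_roots haa
    rw [aeval_def, eval₂_eq_eval_map, ← hQc]
    exact h
  have hcomp : (Multiset.map (fun a => ‖u - a‖) Qc.roots).prod
      ≤ (Multiset.map (fun a => ‖z - a‖) Qc.roots).prod := by
    apply aux_prod_le
    · intro a _; exact norm_nonneg _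
    · intro a haa
      rw [hz_eq]
      exact aux_radial u a _ ha hu (hrootmem a haa)
  calc q ≤ ‖aeval u Q‖ := hq u hu
    _ = (Multiset.map (fun a => ‖u - a‖) Qc.roots).prod := habs u
    _ ≤ (Multiset.map (fun a => ‖z - a‖) Qc.roots).prod := hcomp
    _ = ‖aeval z Q‖ := (habs z).symm

theorem stmt_18 (Q : Polynomial ℤ) (hmonic : Q.Monic) (hodd : Odd (Q.eval 2))
    (hmod2 : Q.map (Int.castRingHom (ZMod 2)) = (X - 1) ^ Q.natDegree)
    (hroots : ∀ z : ℂ, aeval z Q = 0 → ‖z‖ < Real.sqrt 2)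
    (q : ℝ) (hq7 : 7 ≤ q)
    (hq : ∀ z : ℂ, ‖z‖ = Real.sqrt 2 → q ≤ ‖aeval z Q‖)
    (c : ℤ) (hceven : Even c) (hcle : |c| ≤ 14)
    (R : Polynomial ℤ) (hR : R = (X ^ 4 - 1) * Q + C c) :
    R.Monic ∧ R.eval 2 = 15 * Q.eval 2 + c ∧
      R.map (Int.castRingHom (ZMod 2)) = (X - 1) ^ R.natDegree ∧
      (∀ z : ℂ, aeval z R = 0 → ‖z‖ < Real.sqrt 2) ∧
      (∀ z : ℂ, ‖z‖ = Real.sqrt 2 →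
        3 * q - (|c| : ℝ) ≤ ‖aeval z R‖) ∧
      (7 : ℝ) ≤ 3 * q - (|c| : ℝ) := by
  have h41 : ((X : ℤ[X]) ^ 4 - 1).Monic := by
    simpa using monic_X_pow_sub_C (1 : ℤ) (by norm_num : (4:ℕ) ≠ 0)
  have hprodm : (((X : ℤ[X]) ^ 4 - 1) * Q).Monic := h41.mul hmonic
  have hnd41 : ((X : ℤ[X]) ^ 4 - 1).natDegree = 4 := by
    simpa using natDegree_X_pow_sub_C (n := 4) (r := (1:ℤ))
  have hnd : (((X : ℤ[X]) ^ 4 - 1) * Q).natDegree = 4 + Q.natDegree := by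
    rw [h41.natDegree_mul hmonic, hnd41]
  have hRnd : R.natDegree = 4 + Q.natDegree := by
    rw [hR, natDegree_add_C, hnd]
  have hdeglt : (C c).degree < (((X : ℤ[X]) ^ 4 - 1) * Q).degree := by
    apply lt_of_le_of_lt (degree_C_le)
    rw [degree_eq_natDegree hprodm.ne_zero, hnd]
    have h0 : (0:ℕ) < 4 + Q.natDegree := by omega
    exact_mod_cast h0
  have hRmonic : R.Monic := by
    rw [hR]
    exact hprodm.add_of_left hdeglt
  have hclt : (|c| : ℝ) ≤ 14 := by exact_mod_cast hcle
  have hEz : ∀ z : ℂ, aeval z R = (z ^ 4 - 1) * aeval z Q + (c : ℂ) := by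
    intro z
    rw [hR]
    simp
  have hlow : ∀ z : ℂ, Real.sqrt 2 ≤ ‖z‖ →
      3 * q - (|c| : ℝ) ≤ ‖aeval z R‖ := by
    intro z hz
    have hs2 : (0:ℝ) ≤ Real.sqrt 2 := Real.sqrt_nonneg 2
    have hQz := aux_exterior Q hmonic hroots q hq z hz
    have hpow4 : Real.sqrt 2 ^ 4 = 4 := by
      rw [show (4:ℕ) = 2 * 2 from rfl, pow_mul, Real.sq_sqrt] <;> norm_num
    have h4 : (3:ℝ) ≤ ‖z ^ 4 - 1‖ := by
      have h2 : (4:ℝ) ≤ ‖z ^ 4‖ := by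
        rw [norm_pow, ← hpow4]
        exact pow_le_pow_left₀ hs2 hz 4
      have h3 := norm_sub_norm_le (z ^ 4) (1 : ℂ)
      simp only [norm_one] at h3
      linarith
    have hq0 : (0:ℝ) ≤ q := by linarith
    have hmul : 3 * q ≤ ‖z ^ 4 - 1‖ * ‖aeval z Q‖ :=
      mul_le_mul h4 hQz hq0 (norm_nonneg _)
    have hcc : ‖(c : ℂ)‖ = (|c| : ℝ) := by
      simp [Complex.norm_intCast]
    have htri : ‖(z ^ 4 - 1) * aeval z Q‖ - ‖(c : ℂ)‖
        ≤ ‖(z ^ 4 - 1) * aeval z Q + (c : ℂ)‖ := by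
      have h5 := norm_sub_norm_le ((z ^ 4 - 1) * aeval z Q) (-(c : ℂ))
      simp only [sub_neg_eq_add, norm_neg] at h5
      exact h5
    rw [hEz z]
    rw [norm_mul] at htri
    rw [hcc] at htri
    linarith
  refine ⟨hRmonic, ?_, ?_, ?_, ?_, ?_⟩
  · rw [hR]
    simp only [eval_add, eval_mul, eval_sub, eval_pow, eval_X, eval_one, eval_C]
    ring
  · have hc0 : (Int.castRingHom (ZMod 2)) c = 0 := by
      have h2 : (2:ℤ) ∣ c := hceven.two_dvd
      simpa using (ZMod.intCast_zmod_eq_zero_iff_dvd c 2).2 h2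
    have hchar : ((X : (ZMod 2)[X]) - 1) ^ 4 = X ^ 4 - 1 := by
      have := sub_pow_char_pow (R := (ZMod 2)[X]) (p := 2) (X : (ZMod 2)[X]) 1 2
      norm_num at this
      simpa using this
    rw [hR, Polynomial.map_add, Polynomial.map_mul, Polynomial.map_sub, Polynomial.map_pow,
      Polynomial.map_X, Polynomial.map_one, hmod2, map_C, hc0, C_0, add_zero, ← hchar,
      ← pow_add, ← hR, hRnd]
  · intro z hz0
    by_contra h
    push_neg at h
    have hlb := hlow z h
    rw [hz0, norm_zero] at hlb
    linarith
  · intro z hz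
    exact hlow z (le_of_eq hz.symm)
  · linarith
end
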